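/- Let p be an odd prime, let q ∈ ℚ_p satisfy |q−1|_p < 1, let f : ℤ_p → ℚ_p be continuous, and let n be a positive integer. Writing f_n(x) = f(x+n) and I_{−q}(g) = lim_{N→∞} ((1+q)/(1+q^{p^N})) ∑_{x=0}^{p^N−1} (−q)^x g(x) (both limits below exist), one has q^n·I_{−q}(f_n) + (−1)^{n−1}·I_{−q}(f) = [2]_q·∑_{l=0}^{n−1} (−1)^{n−1−l} q^l f(l), where [2]_q = 1+q. In particular, if n is odd then q^n I_{−q}(f_n) + I_{−q}(f) = [2]_q ∑_{l=0}^{n−1} (−1)^l q^l f(l), and if n is even then q^n I_{−q}(f_n) − I_{−q}(f) = [2]_q ∑_{l=0}^{n−1} (−1)^{l−1} q^l f(l). -/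

import Mathlib

open Filter Finset

section Aux

variable {p : ℕ} [hp : Fact (Nat.Prime p)]

/-- Ultrametric bound for sums in ℚ_p. -/
lemma padic_norm_sum_le {ι : Type*} (s : Finset ι) (F : ι → ℚ_[p]) (C : ℝ) (hC : 0 ≤ C)
    (h : ∀ i ∈ s, ‖F i‖ ≤ C) : ‖∑ i ∈ s, F i‖ ≤ C := by
  classical
  induction s using Finset.induction_on with
  | empty => simpa using hC
  | @insert a s' hx ih =>
    rw [Finset.sum_insert hx]
    refine le_trans (Padic.nonarchimedean _ _) (max_le ?_ ?_)
    · exact h a (Finset.mem_insert_self a s')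
    · exact ih fun i hi => h i (Finset.mem_insert_of_mem hi)

lemma norm_q_eq_one {q : ℚ_[p]} (hq : ‖q - 1‖ < 1) : ‖q‖ = 1 := by
  have h2 : q = 1 + (q - 1) := by ring
  rw [h2, Padic.add_eq_max_of_ne (by simp; nlinarith [norm_nonneg (q-1)])]
  simp [le_of_lt hq]

lemma norm_pow_sub_one_le {q : ℚ_[p]} (hq : ‖q - 1‖ < 1) (m : ℕ) :
    ‖q ^ m - 1‖ ≤ ‖q - 1‖ := by
  have h := geom_sum_mul q m
  have : q ^ m - 1 = (∑ i ∈ range m, q ^ i) * (q - 1) := h.symm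
  rw [this, norm_mul]
  have : ‖∑ i ∈ range m, q ^ i‖ ≤ 1 := by
    apply padic_norm_sum_le _ _ _ zero_le_one
    intro i _
    rw [norm_pow, norm_q_eq_one hq, one_pow]
  nlinarith [norm_nonneg (q - 1)]

lemma norm_two_eq_one (hodd : Odd p) : ‖(2 : ℚ_[p])‖ = 1 := by
  have h2 : ((2 : ℤ) : ℚ_[p]) = (2 : ℚ_[p]) := by push_cast; ring
  rw [← h2]
  refine le_antisymm (Padic.norm_int_le_one 2) ?_
  by_contra hlt
  push_neg at hlt
  have := (Padic.norm_intCast_lt_one_iff (k := 2)).mp hlt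
  have hp2 : p ∣ 2 := by exact_mod_cast this
  have := (Nat.prime_dvd_prime_iff_eq hp.out Nat.prime_two).mp hp2
  rw [this] at hodd
  simp [Nat.odd_iff] at hodd

lemma norm_one_add_pow (hodd : Odd p) {q : ℚ_[p]} (hq : ‖q - 1‖ < 1) (m : ℕ) :
    ‖1 + q ^ m‖ = 1 := by
  have h2 : 1 + q ^ m = 2 + (q ^ m - 1) := by ring
  have hlt : ‖q ^ m - 1‖ < ‖(2 : ℚ_[p])‖ := by
    rw [norm_two_eq_one hodd]
    exact lt_of_le_of_lt (norm_pow_sub_one_le hq m) hq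
  have hne : ‖(2 : ℚ_[p])‖ ≠ ‖q ^ m - 1‖ := ne_of_gt hlt
  rw [h2, Padic.add_eq_max_of_ne hne, norm_two_eq_one hodd]
  rw [norm_two_eq_one hodd] at hlt
  exact max_eq_left (le_of_lt hlt)

lemma one_add_pow_ne_zero (hodd : Odd p) {q : ℚ_[p]} (hq : ‖q - 1‖ < 1) (m : ℕ) :
    1 + q ^ m ≠ 0 := by
  intro h
  have := norm_one_add_pow hodd hq m
  rw [h] at this; simp at this

/-- One step of the contraction: raising to the p-th power shrinks `‖· - 1‖`. -/
lemma norm_pow_p_sub_one {q : ℚ_[p]} (hq : ‖q - 1‖ < 1) {q' : ℚ_[p]}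
    (hq' : ‖q' - 1‖ ≤ ‖q - 1‖) :
    ‖q' ^ p - 1‖ ≤ max (p : ℝ)⁻¹ ‖q - 1‖ * ‖q' - 1‖ := by
  set t := q' - 1 with ht
  have hqq : q' = t + 1 := by rw [ht]; ring
  have hps : p - 1 + 1 = p := Nat.succ_pred_eq_of_pos hp.out.pos
  have hexp : q' ^ p - 1 = ∑ k ∈ range p, t ^ (k + 1) * (p.choose (k + 1) : ℚ_[p]) := by
    rw [hqq, add_pow]
    rw [Finset.sum_range_succ' (fun m => t ^ m * (1:ℚ_[p]) ^ (p - m) * (p.choose m : ℚ_[p])) p]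
    simp [one_pow]
  rw [hexp]
  apply padic_norm_sum_le
  · positivity
  · intro k hk
    rw [Finset.mem_range] at hk
    rw [norm_mul, norm_pow]
    rcases eq_or_lt_of_le (Nat.succ_le_of_lt hk) with he | hlt
    · -- k + 1 = p
      have he' : k + 1 = p := he
      have hc : p.choose (k + 1) = 1 := by rw [← he']; exact Nat.choose_self (k+1)
      rw [hc]
      simp only [Nat.cast_one, norm_one, mul_one]
      have hk1 : 2 ≤ k + 1 := he' ▸ hp.out.two_le
      calc ‖t‖ ^ (k + 1) ≤ ‖t‖ ^ 2 := by
            apply pow_le_pow_of_le_one (norm_nonneg t) (le_trans hq' (le_of_lt hq)) hk1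
        _ = ‖t‖ * ‖t‖ := sq ‖t‖
        _ ≤ ‖q - 1‖ * ‖t‖ := by nlinarith [norm_nonneg t]
        _ ≤ max (p : ℝ)⁻¹ ‖q - 1‖ * ‖t‖ := by
            apply mul_le_mul_of_nonneg_right (le_max_right _ _) (norm_nonneg t)
    · -- k + 1 < p
      have hdvd : p ∣ p.choose (k + 1) := hp.out.dvd_choose_self (Nat.succ_ne_zero k) hlt
      obtain ⟨c, hc⟩ := hdvd
      have hnormc : ‖(p.choose (k + 1) : ℚ_[p])‖ ≤ (p : ℝ)⁻¹ := by
        rw [hc]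
        push_cast
        rw [norm_mul, Padic.norm_p]
        have : ‖((c : ℤ) : ℚ_[p])‖ ≤ 1 := Padic.norm_int_le_one c
        have hcc : ‖((c : ℤ) : ℚ_[p])‖ = ‖(c : ℚ_[p])‖ := by push_cast; ring_nf
        rw [hcc] at this
        have hpinv : (0:ℝ) ≤ (p:ℝ)⁻¹ := by positivity
        nlinarith [norm_nonneg ((c : ℚ_[p]))]
      calc ‖t‖ ^ (k + 1) * ‖(p.choose (k + 1) : ℚ_[p])‖
          ≤ ‖t‖ ^ 1 * (p : ℝ)⁻¹ := by
            apply mul_le_mul _ hnormc (norm_nonneg _) (by positivity)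
            apply pow_le_pow_of_le_one (norm_nonneg t) (le_trans hq' (le_of_lt hq))
            omega
        _ = (p : ℝ)⁻¹ * ‖t‖ := by ring
        _ ≤ max (p : ℝ)⁻¹ ‖q - 1‖ * ‖t‖ := by
            apply mul_le_mul_of_nonneg_right (le_max_left _ _) (norm_nonneg t)

lemma tendsto_pow_p_pow {q : ℚ_[p]} (hq : ‖q - 1‖ < 1) :
    Tendsto (fun N : ℕ => q ^ p ^ N) atTop (nhds 1) := by
  set c := max (p : ℝ)⁻¹ ‖q - 1‖ with hcdef
  have hc0 : 0 ≤ c := le_trans (by positivity) (le_max_left _ _)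
  have hc1 : c < 1 := by
    apply max_lt _ hq
    rw [inv_lt_one_iff₀]
    right
    exact_mod_cast hp.out.one_lt
  have key : ∀ N : ℕ, ‖q ^ p ^ N - 1‖ ≤ c ^ N * ‖q - 1‖ := by
    intro N
    induction N with
    | zero => simp
    | succ N ih =>
      have hle : ‖q ^ p ^ N - 1‖ ≤ ‖q - 1‖ := by
        refine le_trans ih ?_
        nlinarith [norm_nonneg (q - 1), pow_le_one₀ hc0 (le_of_lt hc1) (n := N)]
      have := norm_pow_p_sub_one hq hle
      calc ‖q ^ p ^ (N + 1) - 1‖ = ‖(q ^ p ^ N) ^ p - 1‖ := by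
            rw [← pow_mul, pow_succ]
        _ ≤ c * ‖q ^ p ^ N - 1‖ := this
        _ ≤ c * (c ^ N * ‖q - 1‖) := by nlinarith
        _ = c ^ (N + 1) * ‖q - 1‖ := by ring
  rw [tendsto_iff_norm_sub_tendsto_zero]
  apply squeeze_zero (fun N => norm_nonneg _) key
  rw [show (0:ℝ) = 0 * ‖q - 1‖ by ring]
  exact (tendsto_pow_atTop_nhds_zero_of_norm_lt_one (by rwa [Real.norm_of_nonneg hc0])).mul_const _

end Aux

section Main

variable {p : ℕ} [hp : Fact (Nat.Prime p)]

/-- The fermionic Riemann sum. -/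
noncomputable def fermS (q : ℚ_[p]) (g : ℤ_[p] → ℚ_[p]) (N : ℕ) : ℚ_[p] :=
  ((1 + q) / (1 + q ^ p ^ N)) * ∑ x ∈ range (p ^ N), (-q) ^ x * g (x : ℤ_[p])

lemma double_sum (m n : ℕ) (F : ℕ → ℚ_[p]) :
    ∑ x ∈ range (m * n), F x = ∑ j ∈ range m, ∑ r ∈ range n, F (j * n + r) := by
  induction m with
  | zero => simp
  | succ m ih =>
    rw [Nat.succ_mul, Finset.sum_range_add, ih, Finset.sum_range_succ]

lemma norm_neg_q_pow {q : ℚ_[p]} (hq : ‖q - 1‖ < 1) (x : ℕ) : ‖(-q) ^ x‖ = 1 := by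
  rw [norm_pow, norm_neg, norm_q_eq_one hq, one_pow]

/-- Key estimate: `‖fermS q g M - fermS q g N‖ ≤ ε` for `M ≥ N` when `g` moves by at most
`ε` on balls of radius `p^{-N}`. -/
lemma fermS_diff_le (hodd : Odd p) {q : ℚ_[p]} (hq : ‖q - 1‖ < 1) (g : ℤ_[p] → ℚ_[p])
    {N M : ℕ} (hNM : N ≤ M) {ε : ℝ} (hε : 0 ≤ ε)
    (hg : ∀ x y : ℤ_[p], ‖x - y‖ ≤ (p : ℝ) ^ (-(N:ℤ)) → ‖g x - g y‖ ≤ ε) :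
    ‖fermS q g M - fermS q g N‖ ≤ ε := by
  obtain ⟨D, rfl⟩ := Nat.exists_eq_add_of_le hNM
  set m := p ^ D with hm
  set n := p ^ N with hn
  have hmn : p ^ (N + D) = m * n := by rw [hm, hn, pow_add]; ring
  have hQ1 : (1 : ℚ_[p]) + q ^ n ≠ 0 := one_add_pow_ne_zero hodd hq n
  have hQM : (1 : ℚ_[p]) + q ^ (m * n) ≠ 0 := by
    have := one_add_pow_ne_zero hodd hq (p ^ (N + D))
    rwa [hmn] at this
  -- geometric alternating sum
  have hgeo : ∑ j ∈ range m, (-(q ^ n)) ^ j = (1 + q ^ (m * n)) / (1 + q ^ n) := by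
    have hne : -(q ^ n) ≠ 1 := by
      intro h
      apply hQ1
      linear_combination -h
    rw [geom_sum_eq hne]
    have hmodd : Odd m := hodd.pow
    rw [hmodd.neg_pow]
    rw [show -(q^n)^m - 1 = -((q^n)^m + 1) by ring, show -(q^n) - 1 = -(1 + q^n) by ring,
      neg_div_neg_eq, ← pow_mul]
    rw [show n * m = m * n by ring]
    ring_nf
  -- expand the big sum
  have hsplit : ∑ x ∈ range (m * n), (-q) ^ x * g (x : ℤ_[p]) =
      (∑ j ∈ range m, (-(q ^ n)) ^ j) * (∑ r ∈ range n, (-q) ^ r * g (r : ℤ_[p]))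
      + ∑ j ∈ range m, ∑ r ∈ range n,
          (-q) ^ (j * n + r) * (g ((j * n + r : ℕ) : ℤ_[p]) - g (r : ℤ_[p])) := by
    rw [double_sum m n (fun x => (-q) ^ x * g (x : ℤ_[p])), Finset.sum_mul]
    rw [← Finset.sum_add_distrib]
    apply Finset.sum_congr rfl
    intro j _
    rw [Finset.mul_sum, ← Finset.sum_add_distrib]
    apply Finset.sum_congr rfl
    intro r _
    have hpow : (-q) ^ (j * n + r) = (-(q ^ n)) ^ j * (-q) ^ r := by
      have hoddn : Odd n := hodd.pow
      have h1 : ((-1:ℚ_[p])) ^ (j * n) = (-1) ^ j := by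
        rw [mul_comm j n, pow_mul, hoddn.neg_one_pow]
      calc (-q) ^ (j * n + r) = (-1) ^ (j * n) * q ^ (j * n) * (-q) ^ r := by
            rw [pow_add, neg_pow]
        _ = (-1) ^ j * q ^ (j * n) * (-q) ^ r := by rw [h1]
        _ = (-(q ^ n)) ^ j * (-q) ^ r := by
            conv_rhs => rw [neg_pow, ← pow_mul, mul_comm n j]
    rw [hpow]
    ring
  -- put it together
  have hfer : fermS q g (N + D) - fermS q g N =
      ((1 + q) / (1 + q ^ (m * n))) * ∑ j ∈ range m, ∑ r ∈ range n,
        (-q) ^ (j * n + r) * (g ((j * n + r : ℕ) : ℤ_[p]) - g (r : ℤ_[p])) := by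
    unfold fermS
    rw [hmn, hsplit, mul_add, hgeo]
    have : (1 + q) / (1 + q ^ (m * n)) * ((1 + q ^ (m * n)) / (1 + q ^ n) *
        ∑ r ∈ range n, (-q) ^ r * g (r : ℤ_[p])) =
        (1 + q) / (1 + q ^ n) * ∑ r ∈ range n, (-q) ^ r * g (r : ℤ_[p]) := by
      field_simp
    rw [this]
    ring
  rw [hfer, norm_mul]
  have hA : ‖(1 + q) / (1 + q ^ (m * n))‖ = 1 := by
    rw [norm_div]
    have h1 : ‖1 + q‖ = 1 := by
      have := norm_one_add_pow hodd hq 1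
      rwa [pow_one] at this
    have h2 : ‖1 + q ^ (m * n)‖ = 1 := norm_one_add_pow hodd hq (m * n)
    rw [h1, h2]; norm_num
  rw [hA, one_mul]
  apply padic_norm_sum_le _ _ _ hε
  intro j _
  apply padic_norm_sum_le _ _ _ hε
  intro r _
  rw [norm_mul, norm_neg_q_pow hq, one_mul]
  apply hg
  have hcast : ((j * n + r : ℕ) : ℤ_[p]) - (r : ℤ_[p]) = (j : ℤ_[p]) * (p : ℤ_[p]) ^ N := by
    rw [hn]
    push_cast
    ring
  rw [hcast, norm_mul]
  calc ‖(j : ℤ_[p])‖ * ‖(p : ℤ_[p]) ^ N‖ ≤ 1 * ‖(p : ℤ_[p]) ^ N‖ := by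
        apply mul_le_mul_of_nonneg_right (PadicInt.norm_le_one _) (norm_nonneg _)
    _ = (p : ℝ) ^ (-(N:ℤ)) := by rw [one_mul, PadicInt.norm_p_pow]

end Main

section Main2

variable {p : ℕ} [hp : Fact (Nat.Prime p)]

lemma fermS_cauchy (hodd : Odd p) {q : ℚ_[p]} (hq : ‖q - 1‖ < 1) (g : ℤ_[p] → ℚ_[p])
    (hg : Continuous g) : ∃ I, Tendsto (fermS q g) atTop (nhds I) := by
  apply cauchySeq_tendsto_of_complete
  rw [Metric.cauchySeq_iff']
  intro ε hε
  have hug : UniformContinuous g := CompactSpace.uniformContinuous_of_continuous hg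
  rw [Metric.uniformContinuous_iff] at hug
  obtain ⟨δ, hδ, hδg⟩ := hug (ε / 2) (by linarith)
  have hp1 : (1:ℝ) < p := by exact_mod_cast hp.out.one_lt
  obtain ⟨N₀, hN₀⟩ : ∃ N₀ : ℕ, ((p:ℝ)⁻¹) ^ N₀ < δ := by
    apply exists_pow_lt_of_lt_one hδ
    rw [inv_lt_one_iff₀]; right; exact hp1
  refine ⟨N₀, fun M hM => ?_⟩
  rw [dist_eq_norm]
  have hbound : ∀ x y : ℤ_[p], ‖x - y‖ ≤ (p : ℝ) ^ (-(N₀:ℤ)) → ‖g x - g y‖ ≤ ε / 2 := by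
    intro x y hxy
    have hdist : dist x y < δ := by
      rw [dist_eq_norm]
      calc ‖x - y‖ ≤ (p : ℝ) ^ (-(N₀:ℤ)) := hxy
        _ = ((p:ℝ)⁻¹) ^ N₀ := by rw [zpow_neg, zpow_natCast, inv_pow]
        _ < δ := hN₀
    have := hδg hdist
    rw [dist_eq_norm] at this
    linarith
  have := fermS_diff_le hodd hq g hM (by linarith) hbound
  linarith

lemma fermS_shift (hodd : Odd p) {q : ℚ_[p]} (hq : ‖q - 1‖ < 1) (g : ℤ_[p] → ℚ_[p])
    (hg : Continuous g) (J₁ J₀ : ℚ_[p])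
    (h1 : Tendsto (fermS q (fun x => g (x + 1))) atTop (nhds J₁))
    (h0 : Tendsto (fermS q g) atTop (nhds J₀)) :
    q * J₁ + J₀ = (1 + q) * g 0 := by
  -- finite-level identity
  have hfin : ∀ N : ℕ, q * fermS q (fun x => g (x + 1)) N + fermS q g N =
      ((1 + q) / (1 + q ^ p ^ N)) * (g 0 + q ^ p ^ N * g ((p : ℤ_[p]) ^ N)) := by
    intro N
    set m := p ^ N with hm
    have hkey : q * ∑ x ∈ range m, (-q) ^ x * g ((x : ℤ_[p]) + 1) +
        ∑ x ∈ range m, (-q) ^ x * g (x : ℤ_[p]) =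
        g 0 + q ^ m * g ((p : ℤ_[p]) ^ N) := by
      have h1' : q * ∑ x ∈ range m, (-q) ^ x * g ((x : ℤ_[p]) + 1) =
          -∑ x ∈ range m, (-q) ^ (x + 1) * g (((x + 1 : ℕ) : ℤ_[p])) := by
        rw [Finset.mul_sum, ← Finset.sum_neg_distrib]
        apply Finset.sum_congr rfl
        intro x _
        have : ((x + 1 : ℕ) : ℤ_[p]) = (x : ℤ_[p]) + 1 := by push_cast; ring
        rw [this, pow_succ]
        ring
      have h2' : ∑ x ∈ range m, (-q) ^ (x + 1) * g (((x + 1 : ℕ) : ℤ_[p])) =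
          (∑ x ∈ range m, (-q) ^ x * g (x : ℤ_[p])) + (-q) ^ m * g ((m : ℕ) : ℤ_[p])
            - (-q) ^ 0 * g ((0 : ℕ) : ℤ_[p]) := by
        have := Finset.sum_range_succ' (fun x => (-q) ^ x * g ((x : ℕ) : ℤ_[p])) m
        rw [Finset.sum_range_succ (fun x => (-q) ^ x * g ((x : ℕ) : ℤ_[p])) m] at this
        -- this : ∑_{range m} F + F m = ∑_{x<m} F (x+1) + F 0
        linear_combination -this
      have hmodd : Odd m := hodd.pow
      have hcast : ((m : ℕ) : ℤ_[p]) = (p : ℤ_[p]) ^ N := by rw [hm]; push_cast; ring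
      rw [h1', h2', hmodd.neg_pow, hcast]
      simp
      ring
    unfold fermS
    rw [← hm]
    rw [← hkey]
    ring
  -- limit of the right-hand side
  have hpinv : ‖(p : ℤ_[p])‖ < 1 := by
    rw [PadicInt.norm_p]
    rw [inv_lt_one_iff₀]; right; exact_mod_cast hp.out.one_lt
  have hpow0 : Tendsto (fun N : ℕ => (p : ℤ_[p]) ^ N) atTop (nhds 0) :=
    tendsto_pow_atTop_nhds_zero_of_norm_lt_one hpinv
  have hgp : Tendsto (fun N : ℕ => g ((p : ℤ_[p]) ^ N)) atTop (nhds (g 0)) :=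
    (hg.tendsto 0).comp hpow0
  have hqp : Tendsto (fun N : ℕ => q ^ p ^ N) atTop (nhds 1) := tendsto_pow_p_pow hq
  have h2ne : (1 : ℚ_[p]) + 1 ≠ 0 := by
    intro h
    have : (2 : ℚ_[p]) = 0 := by linear_combination h
    norm_num at this
  have hRHS : Tendsto (fun N : ℕ =>
      ((1 + q) / (1 + q ^ p ^ N)) * (g 0 + q ^ p ^ N * g ((p : ℤ_[p]) ^ N)))
      atTop (nhds (((1 + q) / (1 + 1)) * (g 0 + 1 * g 0))) := by
    apply Tendsto.mul
    · exact (tendsto_const_nhds.div (tendsto_const_nhds.add hqp) h2ne)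
    · exact tendsto_const_nhds.add (hqp.mul hgp)
  have hLHS : Tendsto (fun N : ℕ => q * fermS q (fun x => g (x + 1)) N + fermS q g N)
      atTop (nhds (q * J₁ + J₀)) := (h1.const_mul q).add h0
  have := tendsto_nhds_unique (hLHS.congr (fun N => (hfin N))) hRHS
  rw [this]
  field_simp

end Main2

/-- Iterated fermionic integral equation (Eq. (16)–(18)): for continuous `f : ℤ_p → ℚ_p`
and `n ≥ 1`, with `f_n(x) = f(x+n)`, the fermionic Riemann sums for `f_n` and `f` converge
to limits `I_{-q}(f_n)`, `I_{-q}(f)` satisfying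
`q^n I_{-q}(f_n) + (-1)^{n-1} I_{-q}(f) = [2]_q ∑_{l=0}^{n-1} (-1)^{n-1-l} q^l f(l)`;
in particular the odd and even special cases (17) and (18) hold. -/
theorem fermionic_integral_iterated (p : ℕ) [Fact (Nat.Prime p)] (hp : Odd p)
    (q : ℚ_[p]) (hq : ‖q - 1‖ < 1) (f : ℤ_[p] → ℚ_[p]) (hf : Continuous f)
    (n : ℕ) (hn : 0 < n) :
    ∃ Iₙ I₀ : ℚ_[p],
      Filter.Tendsto
        (fun N : ℕ => ((1 + q) / (1 + q ^ p ^ N)) *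
          ∑ x ∈ Finset.range (p ^ N), (-q) ^ x * f ((x : ℤ_[p]) + (n : ℤ_[p])))
        Filter.atTop (nhds Iₙ) ∧
      Filter.Tendsto
        (fun N : ℕ => ((1 + q) / (1 + q ^ p ^ N)) *
          ∑ x ∈ Finset.range (p ^ N), (-q) ^ x * f (x : ℤ_[p]))
        Filter.atTop (nhds I₀) ∧
      q ^ n * Iₙ + (-1) ^ (n - 1) * I₀ =
        (1 + q) * ∑ l ∈ Finset.range n, (-1) ^ (n - 1 - l) * q ^ l * f (l : ℤ_[p]) ∧
      (Odd n → q ^ n * Iₙ + I₀ =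
        (1 + q) * ∑ l ∈ Finset.range n, (-1) ^ l * q ^ l * f (l : ℤ_[p])) ∧
      (Even n → q ^ n * Iₙ - I₀ =
        (1 + q) * ∑ l ∈ Finset.range n, (-1) ^ (l + 1) * q ^ l * f (l : ℤ_[p])) := by
  classical
  set g : ℕ → ℤ_[p] → ℚ_[p] := fun k x => f (x + (k : ℤ_[p])) with hgdef
  have hgc : ∀ k, Continuous (g k) := fun k => hf.comp (continuous_id.add continuous_const)
  have hex : ∀ k, ∃ I, Tendsto (fermS q (g k)) atTop (nhds I) :=
    fun k => fermS_cauchy hp hq (g k) (hgc k)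
  choose J hJ using hex
  have hg0 : g 0 = f := by funext x; simp [hgdef]
  have hrec : ∀ k : ℕ, q * J (k + 1) + J k = (1 + q) * f ((k : ℕ) : ℤ_[p]) := by
    intro k
    have hshift : (fun x => g k (x + 1)) = g (k + 1) := by
      funext x
      simp only [hgdef]
      congr 1
      push_cast
      ring
    have h1 : Tendsto (fermS q (fun x => g k (x + 1))) atTop (nhds (J (k + 1))) := by
      rw [hshift]; exact hJ (k + 1)
    have := fermS_shift hp hq (g k) (hgc k) (J (k + 1)) (J k) h1 (hJ k)
    rw [this]
    congr 1
    simp [hgdef]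
  have hfl : ∀ k : ℕ, g k 0 = f ((k : ℕ) : ℤ_[p]) := by intro k; simp [hgdef]
  -- main identity
  have main : ∀ m : ℕ, 1 ≤ m → q ^ m * J m + (-1) ^ (m - 1) * J 0 =
      (1 + q) * ∑ l ∈ range m, (-1) ^ (m - 1 - l) * q ^ l * f ((l : ℕ) : ℤ_[p]) := by
    intro m hm
    induction m, hm using Nat.le_induction with
    | base => simpa using hrec 0
    | succ m hm ih =>
      have hr := hrec m
      rw [show m + 1 - 1 = m from rfl]
      rw [Finset.sum_range_succ]
      have hsumc : ∑ l ∈ range m, ((-1 : ℚ_[p])) ^ (m - l) * q ^ l * f ((l : ℕ) : ℤ_[p]) =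
          ∑ l ∈ range m, -(((-1 : ℚ_[p])) ^ (m - 1 - l) * q ^ l * f ((l : ℕ) : ℤ_[p])) := by
        apply Finset.sum_congr rfl
        intro l hl
        rw [Finset.mem_range] at hl
        have : m - l = (m - 1 - l) + 1 := by omega
        rw [this, pow_succ]
        ring
      rw [Nat.sub_self]
      have hneg : ((-1 : ℚ_[p])) ^ m = -(-1) ^ (m - 1) := by
        conv_lhs => rw [show m = (m - 1) + 1 from by omega]
        rw [pow_succ]
        ring
      rw [hsumc, Finset.sum_neg_distrib]
      linear_combination q ^ m * hr - ih + J 0 * hneg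
  refine ⟨J n, J 0, ?_, ?_, ?_, ?_, ?_⟩
  · exact hJ n
  · have := hJ 0
    rw [hg0] at this
    exact this
  · exact main n hn
  · intro hodd
    have heven : Even (n - 1) := Nat.Odd.sub_odd hodd odd_one
    have h1 : ((-1 : ℚ_[p])) ^ (n - 1) = 1 := Even.neg_one_pow heven
    have hmain := main n hn
    rw [h1, one_mul] at hmain
    rw [hmain]
    congr 1
    apply Finset.sum_congr rfl
    intro l hl
    rw [Finset.mem_range] at hl
    have hle : l ≤ n - 1 := by omega
    have hkey : ((-1 : ℚ_[p])) ^ (n - 1 - l) * (-1) ^ l = 1 := by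
      rw [← pow_add, Nat.sub_add_cancel hle]
      exact Even.neg_one_pow heven
    have hsq : ((-1 : ℚ_[p])) ^ l * (-1) ^ l = 1 := by
      rw [← pow_add]
      exact Even.neg_one_pow ⟨l, rfl⟩
    have : ((-1 : ℚ_[p])) ^ (n - 1 - l) = (-1) ^ l := by
      calc ((-1 : ℚ_[p])) ^ (n - 1 - l) = (-1) ^ (n - 1 - l) * ((-1) ^ l * (-1) ^ l) := by
            rw [hsq, mul_one]
        _ = ((-1) ^ (n - 1 - l) * (-1) ^ l) * (-1) ^ l := by ring
        _ = (-1) ^ l := by rw [hkey, one_mul]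
    rw [this]
  · intro heven
    have hodd1 : Odd (n - 1) := Nat.Even.sub_odd hn heven odd_one
    have h1 : ((-1 : ℚ_[p])) ^ (n - 1) = -1 := Odd.neg_one_pow hodd1
    have hmain := main n hn
    rw [h1] at hmain
    have hsum : ∑ l ∈ range n, ((-1 : ℚ_[p])) ^ (n - 1 - l) * q ^ l * f ((l : ℕ) : ℤ_[p]) =
        ∑ l ∈ range n, ((-1 : ℚ_[p])) ^ (l + 1) * q ^ l * f ((l : ℕ) : ℤ_[p]) := by
      apply Finset.sum_congr rfl
      intro l hl
      rw [Finset.mem_range] at hl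
      have hle : l ≤ n - 1 := by omega
      have hkey : ((-1 : ℚ_[p])) ^ (n - 1 - l) * (-1) ^ l = -1 := by
        rw [← pow_add, Nat.sub_add_cancel hle]
        exact h1
      have hsq : ((-1 : ℚ_[p])) ^ l * (-1) ^ l = 1 := by
        rw [← pow_add]
        exact Even.neg_one_pow ⟨l, rfl⟩
      have : ((-1 : ℚ_[p])) ^ (n - 1 - l) = (-1) ^ (l + 1) := by
        calc ((-1 : ℚ_[p])) ^ (n - 1 - l)
            = (-1) ^ (n - 1 - l) * ((-1) ^ l * (-1) ^ l) := by rw [hsq, mul_one]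
          _ = ((-1) ^ (n - 1 - l) * (-1) ^ l) * (-1) ^ l := by ring
          _ = -(-1) ^ l := by rw [hkey]; ring
          _ = (-1) ^ (l + 1) := by rw [pow_succ]; ring
      rw [this]
    rw [hsum] at hmain
    linear_combination hmain
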